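/- Let V₁ and V₂ be nonempty finite types, v*, v† ∈ V₁, and α > 1 a real number. Let D₁ be a jointly convex divergence on S(V₁) and D₂ a jointly convex divergence on S(V₁ × V₁). Fix weights p_J, p₁, p₂ ∈ S(V₂) and maps Ψ_J : V₂ → S(V₁ × V₁) and Ψ₁, Ψ₂ : V₂ → S(V₁), and set F_J := ∑ v, p_J(v) • Ψ_J(v), F₁ := ∑ v, p₁(v) • Ψ₁(v), F₂ := ∑ v, p₂(v) • Ψ₂(v). Assume F₁(v*) > 0, F₂(v†) > 0 and the abductive factorization F_J(v*, v†) = α · F₁(v*) · F₂(v†). Then there exists ε₀ > 0 such that for all families J : V₂ → S(V₁ × V₁) and M₁, M₂ : V₂ → S(V₁) satisfying ∑ v, p_J(v) · D₂ (Ψ_J v) (J v) ≤ ε₀, ∑ v, p₁(v) · D₁ (Ψ₁ v) (M₁ v) ≤ ε₀, and ∑ v, p₂(v) · D₁ (Ψ₂ v) (M₂ v) ≤ ε₀, the mixtures G_J := ∑ v, p_J(v) • J v, G₁ := ∑ v, p₁(v) • M₁ v, G₂ := ∑ v, p₂(v) • M₂ v satisfy G_J(v*, v†) > G₁(v*) ·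 G₂(v†). -/

import Mathlib

open scoped BigOperators

/-- A divergence on the probability simplex `stdSimplex ℝ W`: continuous (in the
subspace topology on the simplex), nonnegative, and vanishing exactly on the diagonal. -/
def IsDivergence {W : Type*} [Fintype W] (D : (W → ℝ) → (W → ℝ) → ℝ) : Prop :=
  ContinuousOn (fun pq : (W → ℝ) × (W → ℝ) => D pq.1 pq.2)
      (stdSimplex ℝ W ×ˢ stdSimplex ℝ W) ∧
    (∀ p ∈ stdSimplex ℝ W, ∀ q ∈ stdSimplex ℝ W, 0 ≤ D p q) ∧
    (∀ p ∈ stdSimplex ℝ W, ∀ q ∈ stdSimplex ℝ W, (D p q = 0 ↔ p = q))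

/-- `D` is jointly convex on the simplex. -/
def JointlyConvexDiv {W : Type*} [Fintype W] (D : (W → ℝ) → (W → ℝ) → ℝ) : Prop :=
  ∀ p₁ ∈ stdSimplex ℝ W, ∀ p₂ ∈ stdSimplex ℝ W, ∀ q₁ ∈ stdSimplex ℝ W,
    ∀ q₂ ∈ stdSimplex ℝ W, ∀ t ∈ Set.Icc (0 : ℝ) 1,
      D (t • p₁ + (1 - t) • p₂) (t • q₁ + (1 - t) • q₂) ≤
        t * D p₁ q₁ + (1 - t) * D p₂ q₂

lemma mix_mem {W V : Type*} [Fintype W] [Fintype V]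
    (p : V → ℝ) (hp : p ∈ stdSimplex ℝ V) (Ψ : V → W → ℝ)
    (hΨ : ∀ v, Ψ v ∈ stdSimplex ℝ W) :
    (∑ v : V, p v • Ψ v) ∈ stdSimplex ℝ W :=
  (convex_stdSimplex ℝ W).sum_mem (fun v _ => hp.1 v) hp.2 (fun v _ => hΨ v)

lemma mix_div_le {W V : Type*} [Fintype W] [Fintype V]
    (D : (W → ℝ) → (W → ℝ) → ℝ) (hconv : JointlyConvexDiv D)
    (p : V → ℝ) (hp : p ∈ stdSimplex ℝ V)
    (Ψ J : V → W → ℝ) (hΨ : ∀ v, Ψ v ∈ stdSimplex ℝ W)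
    (hJ : ∀ v, J v ∈ stdSimplex ℝ W) :
    D (∑ v : V, p v • Ψ v) (∑ v : V, p v • J v) ≤ ∑ v : V, p v * D (Ψ v) (J v) := by
  have hcv : ConvexOn ℝ (stdSimplex ℝ W ×ˢ stdSimplex ℝ W)
      (fun pq : (W → ℝ) × (W → ℝ) => D pq.1 pq.2) := by
    refine ⟨(convex_stdSimplex ℝ W).prod (convex_stdSimplex ℝ W), ?_⟩
    intro x hx y hy a b ha hb hab
    have := hconv x.1 hx.1 y.1 hy.1 x.2 hx.2 y.2 hy.2 a ⟨ha, by linarith⟩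
    have hb' : (1 : ℝ) - a = b := by linarith
    simpa [hb', Prod.smul_fst, Prod.smul_snd] using this
  have h := hcv.map_sum_le (t := Finset.univ) (w := p)
    (p := fun v => ((Ψ v, J v) : (W → ℝ) × (W → ℝ)))
    (fun v _ => hp.1 v) hp.2 (fun v _ => ⟨hΨ v, hJ v⟩)
  simpa [Prod.fst_sum, Prod.snd_sum, smul_eq_mul] using h

lemma div_small_close {W : Type*} [Fintype W]
    (D : (W → ℝ) → (W → ℝ) → ℝ) (hD : IsDivergence D)
    (F : W → ℝ) (hF : F ∈ stdSimplex ℝ W) (δ : ℝ) (hδ : 0 < δ) :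
    ∃ ε > 0, ∀ q ∈ stdSimplex ℝ W, D F q ≤ ε → ∀ w, |q w - F w| < δ := by
  classical
  set K : Set (W → ℝ) := stdSimplex ℝ W ∩ {q | δ ≤ dist q F} with hK
  have hKcomp : IsCompact K :=
    (isCompact_stdSimplex ℝ W).inter_right
      (isClosed_le continuous_const (Continuous.dist continuous_id continuous_const))
  have hcont : ContinuousOn (fun q => D F q) (stdSimplex ℝ W) :=
    hD.1.comp ((Continuous.prodMk_right F).continuousOn) (fun q hq => ⟨hF, hq⟩)
  obtain ⟨ε, hε, hεK⟩ : ∃ ε > 0, ∀ q ∈ K, ε < D F q := by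
    rcases K.eq_empty_or_nonempty with hKe | hKne
    · exact ⟨1, one_pos, fun q hq => absurd (hKe ▸ hq) (Set.notMem_empty q)⟩
    · obtain ⟨q₀, hq₀K, hq₀min⟩ :=
        hKcomp.exists_isMinOn hKne (hcont.mono (Set.inter_subset_left))
      have hq₀ne : q₀ ≠ F := by
        intro h
        have : δ ≤ 0 := by simpa [h] using hq₀K.2
        linarith
      have hpos : 0 < D F q₀ := by
        rcases lt_or_eq_of_le (hD.2.1 F hF q₀ hq₀K.1) with h | h
        · exact h
        · exact absurd ((hD.2.2 F hF q₀ hq₀K.1).mp h.symm).symm hq₀ne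
      refine ⟨D F q₀ / 2, by linarith, fun q hq => ?_⟩
      have := hq₀min hq
      simp only [Set.mem_setOf_eq] at this
      linarith [hq₀min hq]
  refine ⟨ε, hε, fun q hq hle w => ?_⟩
  have hqK : q ∉ K := fun h => absurd hle (not_le.mpr (hεK q h))
  have hdist : dist q F < δ := by
    by_contra h
    exact hqK ⟨hq, not_lt.mp h⟩
  calc |q w - F w| = dist (q w) (F w) := (Real.dist_eq _ _).symm
    _ ≤ dist q F := dist_le_pi_dist q F w
    _ < δ := hdist

/-- **Abductive beliefs of an embedded scientist transfer to the universe.**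
If the scientist's embedded prediction distributions `F_J, F₁, F₂` (mixtures of the
answer-interpretations `Ψ` under the scientist's response weights) satisfy the abductive
factorization with `α > 1`, then there is `ε₀ > 0` such that for any families of universe
response distributions `J, M₁, M₂` within the embed-calibration bounds, the corresponding
mixtures `G_J, G₁, G₂` satisfy `G_J(v*, v†) > G₁(v*) · G₂(v†)`. -/
theorem abduction_scientist_to_universe
    {V₁ V₂ : Type*} [Fintype V₁] [Nonempty V₁] [Fintype V₂] [Nonempty V₂]
    (vstar vdag : V₁) (α : ℝ) (hα : 1 < α)
    (D₁ : (V₁ → ℝ) → (V₁ → ℝ) → ℝ) (hD₁ : IsDivergence D₁)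
    (hD₁conv : JointlyConvexDiv D₁)
    (D₂ : (V₁ × V₁ → ℝ) → (V₁ × V₁ → ℝ) → ℝ) (hD₂ : IsDivergence D₂)
    (hD₂conv : JointlyConvexDiv D₂)
    (pJ p₁ p₂ : V₂ → ℝ) (hpJ : pJ ∈ stdSimplex ℝ V₂)
    (hp₁ : p₁ ∈ stdSimplex ℝ V₂) (hp₂ : p₂ ∈ stdSimplex ℝ V₂)
    (ΨJ : V₂ → V₁ × V₁ → ℝ) (hΨJ : ∀ v, ΨJ v ∈ stdSimplex ℝ (V₁ × V₁))
    (Ψ₁ Ψ₂ : V₂ → V₁ → ℝ) (hΨ₁ : ∀ v, Ψ₁ v ∈ stdSimplex ℝ V₁)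
    (hΨ₂ : ∀ v, Ψ₂ v ∈ stdSimplex ℝ V₁)
    (FJ : V₁ × V₁ → ℝ) (hFJdef : FJ = ∑ v : V₂, pJ v • ΨJ v)
    (F₁ : V₁ → ℝ) (hF₁def : F₁ = ∑ v : V₂, p₁ v • Ψ₁ v)
    (F₂ : V₁ → ℝ) (hF₂def : F₂ = ∑ v : V₂, p₂ v • Ψ₂ v)
    (hF₁pos : 0 < F₁ vstar) (hF₂pos : 0 < F₂ vdag)
    (hfact : FJ (vstar, vdag) = α * F₁ vstar * F₂ vdag) :
    ∃ ε₀ : ℝ, 0 < ε₀ ∧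
      ∀ (J : V₂ → V₁ × V₁ → ℝ) (M₁ M₂ : V₂ → V₁ → ℝ),
        (∀ v, J v ∈ stdSimplex ℝ (V₁ × V₁)) →
        (∀ v, M₁ v ∈ stdSimplex ℝ V₁) →
        (∀ v, M₂ v ∈ stdSimplex ℝ V₁) →
        (∑ v : V₂, pJ v * D₂ (ΨJ v) (J v)) ≤ ε₀ →
        (∑ v : V₂, p₁ v * D₁ (Ψ₁ v) (M₁ v)) ≤ ε₀ →
        (∑ v : V₂, p₂ v * D₁ (Ψ₂ v) (M₂ v)) ≤ ε₀ →
        (∑ v : V₂, p₁ v • M₁ v) vstar * (∑ v : V₂, p₂ v • M₂ v) vdag <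
          (∑ v : V₂, pJ v • J v) (vstar, vdag) := by
  classical
  set a := F₁ vstar with ha
  set b := F₂ vdag with hb
  have hab : 0 < a * b := mul_pos hF₁pos hF₂pos
  set s : ℝ := 2 + a + b with hs
  have hspos : 0 < s := by simp only [hs]; nlinarith [hF₁pos, hF₂pos]
  set c : ℝ := (α - 1) * (a * b) with hc
  have hcpos : 0 < c := mul_pos (by linarith) hab
  set δ : ℝ := min 1 (c / (2 * s)) with hδdef
  have hδpos : 0 < δ := lt_min one_pos (by positivity)
  have hδ1 : δ ≤ 1 := min_le_left _ _
  have hδ2 : δ * (2 * s) ≤ c := by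
    have := min_le_right 1 (c / (2 * s))
    calc δ * (2 * s) ≤ (c / (2 * s)) * (2 * s) := by
          apply mul_le_mul_of_nonneg_right this (by positivity)
      _ = c := by field_simp
  have hkey : (a + δ) * (b + δ) + δ ≤ α * a * b := by nlinarith [hδpos, hδ1, hδ2, hab]
  have hFJmem : FJ ∈ stdSimplex ℝ (V₁ × V₁) := hFJdef ▸ mix_mem pJ hpJ ΨJ hΨJ
  have hF₁mem : F₁ ∈ stdSimplex ℝ V₁ := hF₁def ▸ mix_mem p₁ hp₁ Ψ₁ hΨ₁
  have hF₂mem : F₂ ∈ stdSimplex ℝ V₁ := hF₂def ▸ mix_mem p₂ hp₂ Ψ₂ hΨ₂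
  obtain ⟨εJ, hεJ, hεJprop⟩ := div_small_close D₂ hD₂ FJ hFJmem δ hδpos
  obtain ⟨ε₁, hε₁, hε₁prop⟩ := div_small_close D₁ hD₁ F₁ hF₁mem δ hδpos
  obtain ⟨ε₂, hε₂, hε₂prop⟩ := div_small_close D₁ hD₁ F₂ hF₂mem δ hδpos
  refine ⟨min εJ (min ε₁ ε₂), lt_min hεJ (lt_min hε₁ hε₂), ?_⟩
  intro J M₁ M₂ hJ hM₁ hM₂ hbJ hb₁ hb₂
  set GJ := ∑ v : V₂, pJ v • J v with hGJ
  set G₁ := ∑ v : V₂, p₁ v • M₁ v with hG₁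
  set G₂ := ∑ v : V₂, p₂ v • M₂ v with hG₂
  have hGJmem : GJ ∈ stdSimplex ℝ (V₁ × V₁) := mix_mem pJ hpJ J hJ
  have hG₁mem : G₁ ∈ stdSimplex ℝ V₁ := mix_mem p₁ hp₁ M₁ hM₁
  have hG₂mem : G₂ ∈ stdSimplex ℝ V₁ := mix_mem p₂ hp₂ M₂ hM₂
  have hdJ : D₂ FJ GJ ≤ εJ := by
    rw [hFJdef]
    calc D₂ (∑ v : V₂, pJ v • ΨJ v) GJ ≤ ∑ v : V₂, pJ v * D₂ (ΨJ v) (J v) :=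
          mix_div_le D₂ hD₂conv pJ hpJ ΨJ J hΨJ hJ
      _ ≤ min εJ (min ε₁ ε₂) := hbJ
      _ ≤ εJ := min_le_left _ _
  have hd₁ : D₁ F₁ G₁ ≤ ε₁ := by
    rw [hF₁def]
    calc D₁ (∑ v : V₂, p₁ v • Ψ₁ v) G₁ ≤ ∑ v : V₂, p₁ v * D₁ (Ψ₁ v) (M₁ v) :=
          mix_div_le D₁ hD₁conv p₁ hp₁ Ψ₁ M₁ hΨ₁ hM₁
      _ ≤ min εJ (min ε₁ ε₂) := hb₁
      _ ≤ ε₁ := le_trans (min_le_right _ _) (min_le_left _ _)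
  have hd₂ : D₁ F₂ G₂ ≤ ε₂ := by
    rw [hF₂def]
    calc D₁ (∑ v : V₂, p₂ v • Ψ₂ v) G₂ ≤ ∑ v : V₂, p₂ v * D₁ (Ψ₂ v) (M₂ v) :=
          mix_div_le D₁ hD₁conv p₂ hp₂ Ψ₂ M₂ hΨ₂ hM₂
      _ ≤ min εJ (min ε₁ ε₂) := hb₂
      _ ≤ ε₂ := le_trans (min_le_right _ _) (min_le_right _ _)
  have hcJ := hεJprop GJ hGJmem hdJ (vstar, vdag)
  have hc₁ := hε₁prop G₁ hG₁mem hd₁ vstar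
  have hc₂ := hε₂prop G₂ hG₂mem hd₂ vdag
  rw [abs_sub_lt_iff] at hcJ hc₁ hc₂
  have h1 : G₁ vstar < a + δ := by linarith [hc₁.1]
  have h2 : G₂ vdag < b + δ := by linarith [hc₂.1]
  have h3 : α * a * b - δ < GJ (vstar, vdag) := by
    have := hcJ.2
    rw [hfact] at this
    linarith
  have := mul_lt_mul'' h1 h2 (hG₁mem.1 vstar) (hG₂mem.1 vdag)
  linarith
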